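/- Fix n ≥ 1 and let L = (ZMod 2)^n. Suppose k₁, …, k_{n+1} ∈ L span L. Then the kernel of the 𝔽₂-linear map 𝔽₂^{n+1} → L sending (λ₁, …, λ_{n+1}) to λ₁k₁ + ⋯ + λ_{n+1}k_{n+1} contains exactly one nonzero element λ = (λ₁, …, λ_{n+1}). Define D₁ : L^{n+1} → 𝔽₂ by D₁(k₁, …, k_{n+1}) := 1 + λ₁ + ⋯ + λ_{n+1} when k₁, …, k_{n+1} span L (with λ the unique nonzero element of that kernel), and D₁(k₁, …, k_{n+1}) := 0 otherwise. Then D₁ is GL-invariant, rank-vanishing, multilinear, and not identically zero. -/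

import Mathlib

namespace Stmt8Aux

open Finset Submodule

abbrev F := ZMod 2

lemma F01 (a : F) : a = 0 ∨ a = 1 := by
  have h : ∀ a : F, a = 0 ∨ a = 1 := by decide
  exact h a

variable {n : ℕ}

lemma vadd_self (v : Fin n → F) : v + v = 0 := by
  funext i
  have h : ∀ a : F, a + a = 0 := by decide
  exact h (v i)

/-- existence and uniqueness of the nonzero kernel element -/
lemma exists_unique_ker (k : Fin (n + 1) → Fin n → F)
    (h : Submodule.span F (Set.range k) = ⊤) :
    ∃! lam : Fin (n + 1) → F, lam ≠ 0 ∧ ∑ t, lam t • k t = 0 := by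
  set φ := Fintype.linearCombination F k with hφ
  have hφapp : ∀ c : Fin (n + 1) → F, φ c = ∑ t, c t • k t := fun c => rfl
  have hrange : LinearMap.range φ = ⊤ := by
    rw [hφ, Fintype.range_linearCombination, h]
  have hker : Module.finrank F (LinearMap.ker φ) = 1 := by
    have h1 := LinearMap.finrank_range_add_finrank_ker φ
    rw [hrange, finrank_top] at h1
    have h2 : Module.finrank F (Fin n → F) = n := Module.finrank_fin_fun F
    have h3 : Module.finrank F (Fin (n + 1) → F) = n + 1 := Module.finrank_fin_fun F
    omega
  have hex : ∃ lam : Fin (n + 1) → F, lam ≠ 0 ∧ lam ∈ LinearMap.ker φ := by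
    have hne : LinearMap.ker φ ≠ ⊥ := by
      intro hb
      rw [hb, finrank_bot] at hker
      omega
    obtain ⟨v, hv, hv0⟩ := Submodule.exists_mem_ne_zero_of_ne_bot hne
    exact ⟨v, hv0, hv⟩
  obtain ⟨lam, hlam0, hlamker⟩ := hex
  refine ⟨lam, ⟨hlam0, by simpa [hφapp] using hlamker⟩, ?_⟩
  rintro mu ⟨hmu0, hmuker⟩
  have hmuker' : mu ∈ LinearMap.ker φ := by simpa [hφapp] using hmuker
  have hspan : Submodule.span F {lam} = LinearMap.ker φ := by
    apply Submodule.eq_of_le_of_finrank_le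
    · rw [Submodule.span_le, Set.singleton_subset_iff]; exact hlamker
    · rw [hker, finrank_span_singleton hlam0]
  rw [← hspan] at hmuker'
  obtain ⟨c, hc⟩ := Submodule.mem_span_singleton.mp hmuker'
  rcases F01 c with h0 | h1
  · exfalso; apply hmu0; rw [← hc, h0, zero_smul]
  · rw [← hc, h1, one_smul]

lemma sum_smul_update (k : Fin (n + 1) → Fin n → F) (t : Fin (n + 1)) (z : Fin n → F)
    (lam : Fin (n + 1) → F) :
    ∑ s, lam s • Function.update k t z s
      = lam t • z + ∑ s ∈ Finset.univ.erase t, lam s • k s := by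
  rw [← Finset.add_sum_erase _ _ (Finset.mem_univ t)]
  congr 1
  · rw [Function.update_self]
  · apply Finset.sum_congr rfl
    intro s hs
    rw [Function.update_of_ne (Finset.ne_of_mem_erase hs)]

lemma sum_erase_update (c : Fin (n + 1) → F) (t : Fin (n + 1)) (a : F)
    (k : Fin (n + 1) → Fin n → F) :
    ∑ s ∈ Finset.univ.erase t, (Function.update c t a) s • k s
      = ∑ s ∈ Finset.univ.erase t, c s • k s :=
  Finset.sum_congr rfl fun s hs => by
    rw [Function.update_of_ne (Finset.ne_of_mem_erase hs)]

lemma sum_update_one (c : Fin (n + 1) → F) (t : Fin (n + 1)) :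
    ∑ s, Function.update c t (1 : F) s = 1 + ∑ s ∈ Finset.univ.erase t, c s := by
  rw [← Finset.add_sum_erase _ _ (Finset.mem_univ t)]
  congr 1
  · rw [Function.update_self]
  · exact Finset.sum_congr rfl fun s hs => Function.update_of_ne (Finset.ne_of_mem_erase hs) _ _

lemma span_update (k : Fin (n + 1) → Fin n → F) (t : Fin (n + 1)) (z : Fin n → F) :
    Submodule.span F (Set.range (Function.update k t z))
      = Submodule.span F (Set.range (Function.update k t 0)) ⊔ Submodule.span F {z} := by
  apply le_antisymm
  · rw [Submodule.span_le]
    rintro _ ⟨s, rfl⟩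
    by_cases hs : s = t
    · subst hs
      rw [Function.update_self]
      exact Submodule.mem_sup_right (Submodule.mem_span_singleton_self z)
    · rw [Function.update_of_ne hs]
      apply Submodule.mem_sup_left
      apply Submodule.subset_span
      exact ⟨s, Function.update_of_ne hs _ _⟩
  · apply sup_le
    · rw [Submodule.span_le]
      rintro _ ⟨s, rfl⟩
      by_cases hs : s = t
      · subst hs; rw [Function.update_self]; exact Submodule.zero_mem _
      · rw [Function.update_of_ne hs]
        exact Submodule.subset_span ⟨s, Function.update_of_ne hs _ _⟩
    · rw [Submodule.span_le, Set.singleton_subset_iff]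
      exact Submodule.subset_span ⟨t, Function.update_self _ _ _⟩

lemma memC (V : Submodule F (Fin n → F)) (x y : Fin n → F)
    (hx : V ⊔ Submodule.span F {x} = ⊤) (hy : y ∉ V) : x + y ∈ V := by
  have hmem : y ∈ V ⊔ Submodule.span F {x} := by rw [hx]; trivial
  obtain ⟨v, hv, w, hw, hvw⟩ := Submodule.mem_sup.mp hmem
  obtain ⟨c, rfl⟩ := Submodule.mem_span_singleton.mp hw
  rcases F01 c with h0 | h1
  · exfalso; apply hy; rw [← hvw, h0, zero_smul, add_zero]; exact hv
  · rw [h1, one_smul] at hvw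
    have hxy : x + y = v := by
      rw [← hvw, ← add_assoc, add_comm x v, add_assoc, vadd_self, add_zero]
    rw [hxy]; exact hv

lemma supA (V : Submodule F (Fin n → F)) (x y : Fin n → F)
    (hx : V ⊔ Submodule.span F {x} = ⊤) (hy : V ⊔ Submodule.span F {y} ≠ ⊤) :
    V ⊔ Submodule.span F {x + y} = ⊤ := by
  by_cases hyV : y ∈ V
  · rw [eq_top_iff, ← hx]
    apply sup_le le_sup_left
    rw [Submodule.span_le, Set.singleton_subset_iff]
    have hxy : x + y ∈ V ⊔ Submodule.span F {x + y} :=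
      Submodule.mem_sup_right (Submodule.mem_span_singleton_self _)
    have h := Submodule.add_mem _ hxy (Submodule.mem_sup_left hyV)
    rwa [add_assoc, vadd_self, add_zero] at h
  · exfalso
    apply hy
    have hxyV : x + y ∈ V := memC V x y hx hyV
    rw [eq_top_iff, ← hx]
    apply sup_le le_sup_left
    rw [Submodule.span_le, Set.singleton_subset_iff]
    have h := Submodule.add_mem _ (Submodule.mem_sup_left hxyV)
      (Submodule.mem_sup_right (Submodule.mem_span_singleton_self y))
    rwa [add_assoc, vadd_self, add_zero] at h

/-- the erase-sum lies in the span of the updated-by-zero family -/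
lemma erase_sum_mem (k : Fin (n + 1) → Fin n → F) (t : Fin (n + 1)) (lam : Fin (n + 1) → F) :
    ∑ s ∈ Finset.univ.erase t, lam s • k s
      ∈ Submodule.span F (Set.range (Function.update k t 0)) := by
  apply Submodule.sum_mem
  intro s hs
  apply Submodule.smul_mem
  apply Submodule.subset_span
  exact ⟨s, Function.update_of_ne (Finset.ne_of_mem_erase hs) _ _⟩

/-- if both `update k t x` and `update k t y` span while the rest does not span,
there is a common nonzero kernel vector. -/
lemma lam_shared (k : Fin (n + 1) → Fin n → F) (t : Fin (n + 1)) (x y : Fin n → F)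
    (hV : Submodule.span F (Set.range (Function.update k t 0)) ≠ ⊤)
    (hx : Submodule.span F (Set.range (Function.update k t x)) = ⊤)
    (hy : Submodule.span F (Set.range (Function.update k t y)) = ⊤) :
    ∃ lam : Fin (n + 1) → F, lam ≠ 0 ∧
      (∑ s, lam s • Function.update k t x s = 0) ∧
      (∑ s, lam s • Function.update k t y s = 0) := by
  set V := Submodule.span F (Set.range (Function.update k t 0)) with hVdef
  have hxV : x ∉ V := by
    intro hxV
    apply hV
    rw [← hx, span_update, sup_eq_left.mpr]
    rwa [Submodule.span_le, Set.singleton_subset_iff]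
  obtain ⟨lam, ⟨hlam0, hker⟩, -⟩ := exists_unique_ker _ hx
  rw [sum_smul_update] at hker
  have hlamt : lam t = 0 := by
    rcases F01 (lam t) with h0 | h1
    · exact h0
    · exfalso
      apply hxV
      rw [h1, one_smul] at hker
      have hx' : x = ∑ s ∈ Finset.univ.erase t, lam s • k s := by
        have := congrArg (fun w => x + w) hker
        simpa [← add_assoc, vadd_self] using this.symm
      rw [hx']
      exact erase_sum_mem k t lam
  rw [hlamt, zero_smul, zero_add] at hker
  refine ⟨lam, hlam0, ?_, ?_⟩ <;>
    rw [sum_smul_update, hlamt, zero_smul, zero_add, hker]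

lemma span_comp_top (A : (Fin n → F) ≃ₗ[F] (Fin n → F)) (k : Fin (n + 1) → Fin n → F)
    (h : Submodule.span F (Set.range k) = ⊤) :
    Submodule.span F (Set.range fun t => A (k t)) = ⊤ := by
  have hr : Set.range (fun t => A (k t)) = ⇑A '' Set.range k := Set.range_comp ⇑A k
  rw [hr, Submodule.span_image_linearEquiv, h, Submodule.map_top]
  exact LinearMap.range_eq_top.mpr A.surjective

end Stmt8Aux

/-- `D` is invariant under the natural `GL(n, 𝔽₂)`-action on `(n+1)`-tuples of vectors of
`L = 𝔽₂ⁿ`. -/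
def GLInvariant (n : ℕ) (D : (Fin (n + 1) → Fin n → ZMod 2) → ZMod 2) : Prop :=
  ∀ (A : (Fin n → ZMod 2) ≃ₗ[ZMod 2] (Fin n → ZMod 2)) (k : Fin (n + 1) → Fin n → ZMod 2),
    D (fun t => A (k t)) = D k

/-- `D` vanishes on tuples whose span is a proper subspace of `L = 𝔽₂ⁿ` (rank `< n`). -/
def RankVanishing (n : ℕ) (D : (Fin (n + 1) → Fin n → ZMod 2) → ZMod 2) : Prop :=
  ∀ k : Fin (n + 1) → Fin n → ZMod 2,
    Submodule.span (ZMod 2) (Set.range k) ≠ ⊤ → D k = 0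

/-- `D` is multilinear: in each argument, with the others fixed, it is additive
(equivalently `𝔽₂`-linear). -/
def Multilinear (n : ℕ) (D : (Fin (n + 1) → Fin n → ZMod 2) → ZMod 2) : Prop :=
  ∀ (t : Fin (n + 1)) (k : Fin (n + 1) → Fin n → ZMod 2) (x y : Fin n → ZMod 2),
    D (Function.update k t (x + y)) = D (Function.update k t x) + D (Function.update k t y)

open Stmt8Aux Finset in
theorem stmt8 (n : ℕ) (hn : 1 ≤ n) :
    (∀ k : Fin (n + 1) → Fin n → ZMod 2,
      Submodule.span (ZMod 2) (Set.range k) = ⊤ →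
      ∃! lam : Fin (n + 1) → ZMod 2, lam ≠ 0 ∧ ∑ t, lam t • k t = 0) ∧
    ∀ D₁ : (Fin (n + 1) → Fin n → ZMod 2) → ZMod 2,
      (∀ k : Fin (n + 1) → Fin n → ZMod 2,
        (Submodule.span (ZMod 2) (Set.range k) = ⊤ →
          ∀ lam : Fin (n + 1) → ZMod 2, lam ≠ 0 → ∑ t, lam t • k t = 0 →
            D₁ k = 1 + ∑ t, lam t) ∧
        (Submodule.span (ZMod 2) (Set.range k) ≠ ⊤ → D₁ k = 0)) →
      GLInvariant n D₁ ∧ RankVanishing n D₁ ∧ Multilinear n D₁ ∧ D₁ ≠ fun _ => 0 := by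
  constructor
  · exact fun k h => exists_unique_ker k h
  intro D₁ hD
  refine ⟨?_, ?_, ?_, ?_⟩
  · -- GL invariance
    intro A k
    obtain ⟨h1A, h2A⟩ := hD (fun t => A (k t))
    obtain ⟨h1, h2⟩ := hD k
    by_cases h : Submodule.span (ZMod 2) (Set.range k) = ⊤
    · have hA := span_comp_top A k h
      obtain ⟨lam, ⟨hlam0, hker⟩, -⟩ := exists_unique_ker k h
      have hkerA : ∑ t, lam t • A (k t) = 0 := by
        have heq : ∑ t, lam t • A (k t) = A (∑ t, lam t • k t) := by
          rw [map_sum]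
          exact Finset.sum_congr rfl fun t _ => (map_smul A _ _).symm
        rw [heq, hker, map_zero]
      rw [h1A hA lam hlam0 hkerA, h1 h lam hlam0 hker]
    · have hA : Submodule.span (ZMod 2) (Set.range fun t => A (k t)) ≠ ⊤ := by
        intro hc
        apply h
        have hc' := span_comp_top A.symm (fun t => A (k t)) hc
        simpa only [LinearEquiv.symm_apply_apply] using hc'
      rw [h2A hA, h2 h]
  · -- rank vanishing
    exact fun k h => (hD k).2 h
  · -- multilinear
    intro t k x y
    obtain ⟨hx1, hx2⟩ := hD (Function.update k t x)
    obtain ⟨hy1, hy2⟩ := hD (Function.update k t y)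
    obtain ⟨hxy1, hxy2⟩ := hD (Function.update k t (x + y))
    set V := Submodule.span (ZMod 2) (Set.range (Function.update k t 0)) with hVdef
    by_cases hx : Submodule.span (ZMod 2) (Set.range (Function.update k t x)) = ⊤ <;>
      by_cases hy : Submodule.span (ZMod 2) (Set.range (Function.update k t y)) = ⊤ <;>
      by_cases hxy : Submodule.span (ZMod 2) (Set.range (Function.update k t (x + y))) = ⊤
    · -- TTT
      by_cases hV : V = ⊤
      · -- construct explicit kernel vectors from coordinates
        have hxV : x ∈ V := by rw [hV]; trivial
        have hyV : y ∈ V := by rw [hV]; trivial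
        obtain ⟨cx, hcx⟩ := (Submodule.mem_span_range_iff_exists_fun (ZMod 2)).mp hxV
        obtain ⟨cy, hcy⟩ := (Submodule.mem_span_range_iff_exists_fun (ZMod 2)).mp hyV
        rw [sum_smul_update, smul_zero, zero_add] at hcx hcy
        have hcxy : ∑ s ∈ Finset.univ.erase t, (cx + cy) s • k s = x + y := by
          have hpt : ∀ s, (cx + cy) s • k s = cx s • k s + cy s • k s := by
            intro s; rw [Pi.add_apply, add_smul]
          rw [Finset.sum_congr rfl fun s _ => hpt s, Finset.sum_add_distrib, hcx, hcy]
        have hne : ∀ c : Fin (n + 1) → ZMod 2, Function.update c t 1 ≠ 0 := by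
          intro c hc
          have h0 := congrFun hc t
          rw [Function.update_self, Pi.zero_apply] at h0
          exact one_ne_zero h0
        have hkerc : ∀ (z : Fin n → ZMod 2) (c : Fin (n + 1) → ZMod 2),
            (∑ s ∈ Finset.univ.erase t, c s • k s = z) →
            ∑ s, Function.update c t 1 s • Function.update k t z s = 0 := by
          intro z c hc
          rw [sum_smul_update, sum_erase_update, hc, Function.update_self, one_smul, vadd_self]
        have Dx := hx1 hx _ (hne cx) (hkerc x cx hcx)
        have Dy := hy1 hy _ (hne cy) (hkerc y cy hcy)
        have Dxy := hxy1 hxy _ (hne (cx + cy)) (hkerc (x + y) (cx + cy) hcxy)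
        rw [sum_update_one] at Dx Dy Dxy
        rw [Dx, Dy, Dxy]
        have hsplit : ∑ s ∈ Finset.univ.erase t, (cx + cy) s
            = (∑ s ∈ Finset.univ.erase t, cx s) + ∑ s ∈ Finset.univ.erase t, cy s := by
          simp [Finset.sum_add_distrib]
        rw [hsplit]
        have key : ∀ a b : ZMod 2, 1 + (1 + (a + b)) = (1 + (1 + a)) + (1 + (1 + b)) := by
          decide
        exact key _ _
      · -- impossible: V ≠ ⊤ with all three spanning
        exfalso
        have hxV : x ∉ V := by
          intro hxV
          apply hV
          rw [← hx, span_update, sup_eq_left.mpr]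
          rwa [Submodule.span_le, Set.singleton_subset_iff]
        have hyV : y ∉ V := by
          intro hyV
          apply hV
          rw [← hy, span_update, sup_eq_left.mpr]
          rwa [Submodule.span_le, Set.singleton_subset_iff]
        have hxyV : x + y ∈ V := memC V x y (by rw [← span_update]; exact hx) hyV
        apply hV
        rw [← hxy, span_update, sup_eq_left.mpr]
        rwa [Submodule.span_le, Set.singleton_subset_iff]
    · -- TTF
      have hV : V ≠ ⊤ := by
        intro hV
        apply hxy
        rw [span_update, ← hVdef, hV]
        exact top_sup_eq _
      obtain ⟨lam, hlam0, hkx, hky⟩ := lam_shared k t x y hV hx hy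
      rw [hx1 hx lam hlam0 hkx, hy1 hy lam hlam0 hky, hxy2 hxy]
      have key : ∀ a : ZMod 2, (0 : ZMod 2) = a + a := by decide
      exact key _
    · -- TFT
      have hV : V ≠ ⊤ := by
        intro hV
        apply hy
        rw [span_update, ← hVdef, hV]
        exact top_sup_eq _
      obtain ⟨lam, hlam0, hkx, hkxy⟩ := lam_shared k t x (x + y) hV hx hxy
      rw [hx1 hx lam hlam0 hkx, hxy1 hxy lam hlam0 hkxy, hy2 hy, add_zero]
    · -- TFF impossible
      exfalso
      apply hxy
      rw [span_update, ← hVdef]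
      exact supA V x y (by rw [← span_update]; exact hx)
        (by rw [hVdef, ← span_update]; exact hy)
    · -- FTT
      have hV : V ≠ ⊤ := by
        intro hV
        apply hx
        rw [span_update, ← hVdef, hV]
        exact top_sup_eq _
      obtain ⟨lam, hlam0, hky, hkxy⟩ := lam_shared k t y (x + y) hV hy hxy
      rw [hy1 hy lam hlam0 hky, hxy1 hxy lam hlam0 hkxy, hx2 hx, zero_add]
    · -- FTF impossible
      exfalso
      apply hxy
      rw [span_update, ← hVdef, show x + y = y + x from add_comm x y]
      exact supA V y x (by rw [← span_update]; exact hy)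
        (by rw [hVdef, ← span_update]; exact hx)
    · -- FFT impossible
      exfalso
      apply hx
      have h := supA V (x + y) y (by rw [← span_update]; exact hxy)
        (by rw [hVdef, ← span_update]; exact hy)
      rw [add_assoc, vadd_self, add_zero] at h
      rw [span_update, ← hVdef]
      exact h
    · -- FFF
      rw [hx2 hx, hy2 hy, hxy2 hxy, add_zero]
  · -- not identically zero
    intro hzero
    set k₀ : Fin (n + 1) → Fin n → ZMod 2 :=
      fun t => Pi.single (⟨t.val % n, Nat.mod_lt _ hn⟩ : Fin n) 1 with hk₀
    have htop : Submodule.span (ZMod 2) (Set.range k₀) = ⊤ := by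
      rw [eq_top_iff, ← (Pi.basisFun (ZMod 2) (Fin n)).span_eq, Submodule.span_le]
      rintro _ ⟨i, rfl⟩
      rw [Pi.basisFun_apply]
      apply Submodule.subset_span
      refine ⟨⟨i.val, Nat.lt_succ_of_lt i.isLt⟩, ?_⟩
      have hi : (⟨(i : ℕ) % n, Nat.mod_lt _ hn⟩ : Fin n) = i :=
        Fin.ext (Nat.mod_eq_of_lt i.isLt)
      show Pi.single (⟨(i : ℕ) % n, Nat.mod_lt _ hn⟩ : Fin n) 1 = Pi.single i 1
      rw [hi]
    have ht0n : (⟨0, Nat.succ_pos n⟩ : Fin (n + 1)) ≠ ⟨n, Nat.lt_succ_self n⟩ :=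
      Fin.ne_of_val_ne (show (0 : ℕ) ≠ n by omega)
    set t0 : Fin (n + 1) := ⟨0, Nat.succ_pos n⟩ with ht0
    set tn : Fin (n + 1) := ⟨n, Nat.lt_succ_self n⟩ with htn
    set p0 : Fin (n + 1) → ZMod 2 := Pi.single t0 1 with hp0
    set pn : Fin (n + 1) → ZMod 2 := Pi.single tn 1 with hpn
    set lam : Fin (n + 1) → ZMod 2 := p0 + pn with hlam
    have hlam0 : lam ≠ 0 := by
      intro h
      have h0 := congrFun h t0
      rw [show lam t0 = p0 t0 + pn t0 from rfl, hp0, hpn,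
        Pi.single_eq_same, Pi.single_eq_of_ne ht0n, add_zero, Pi.zero_apply] at h0
      exact one_ne_zero h0
    have hkeq : k₀ t0 = k₀ tn := by
      have h : (⟨(0 : ℕ) % n, Nat.mod_lt _ hn⟩ : Fin n) = ⟨n % n, Nat.mod_lt _ hn⟩ :=
        Fin.ext (by simp [Nat.mod_self])
      show Pi.single (⟨(0 : ℕ) % n, Nat.mod_lt _ hn⟩ : Fin n) 1
          = Pi.single (⟨(n : ℕ) % n, Nat.mod_lt _ hn⟩ : Fin n) 1
      rw [h]
    have hker : ∑ t, lam t • k₀ t = 0 := by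
      have hsplit : ∀ t, lam t • k₀ t = p0 t • k₀ t + pn t • k₀ t :=
        fun t => add_smul _ _ _
      rw [Finset.sum_congr rfl fun t _ => hsplit t, Finset.sum_add_distrib]
      have hs : ∀ a : Fin (n + 1), ∑ t, (Pi.single a 1 : Fin (n + 1) → ZMod 2) t • k₀ t
          = k₀ a := by
        intro a
        rw [Finset.sum_eq_single_of_mem a (Finset.mem_univ a)
          (fun b _ hb => by rw [Pi.single_eq_of_ne hb, zero_smul]), Pi.single_eq_same, one_smul]
      rw [hp0, hpn, hs t0, hs tn, hkeq, vadd_self]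
    have hsum : ∑ t, lam t = 0 := by
      have h1 : ∑ s, p0 s = 1 := Fintype.sum_pi_single' t0 1
      have h2 : ∑ s, pn s = 1 := Fintype.sum_pi_single' tn 1
      calc ∑ s, lam s
          = ∑ s, (p0 s + pn s) := rfl
        _ = 1 + 1 := by rw [Finset.sum_add_distrib, h1, h2]
        _ = 0 := by decide
    have hval := (hD k₀).1 htop lam hlam0 hker
    rw [hsum, add_zero, hzero] at hval
    exact one_ne_zero hval.symm
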